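/- arXiv:2510.20555 — 8 statements merged into one kernel-verified Lean document; each statement's English description precedes it below -/
import Mathlib

section
/- Let $h_1,\ldots,h_N:\mathcal{D}\to\mathbb{R}_{>0}$ be $u$-balanced (i.e., $h_i(x)/h_j(x)\le u$ for all $i,j,x$), let $\varepsilon\in(0,1]$, set $\delta=\varepsilon/(4uN)$, and fix $i\in[N]$. Let $\mu\in[0,1]^N$ with $\mu_i=1$, and define $\lambda_j=\max(\mu_j,\delta)$ for all $j$. If $x(\lambda)$ minimizes $g_\lambda=\sum_j\lambda_j h_j$ over $\mathcal{D}$ and $x(\mu)$ minimizes $g_\mu=\sum_j\mu_j h_j$ over $\mathcal{D}$, then $g_\lambda(x(\lambda))\le(1+\varepsilon/4)\,g_\mu(x(\mu))$, and moreover $g_\mu(x(\lambda))\le g_\lambda(x(\lambda))$. -/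
/-- with `δ = ε/(4uN)` and `λ_j = max(μ_j, δ)`, the optimal values of
`g_λ` and `g_μ` are within factor `1 + ε/4`, and `g_μ(x(λ)) ≤ g_λ(x(λ))`. -/
theorem stmt2 {D : Type*} [Nonempty D] {N : ℕ} (hN : 1 ≤ N)
    (h : Fin N → D → ℝ) (hpos : ∀ i x, 0 < h i x)
    (u : ℝ) (hu : 1 ≤ u)
    (hbal : ∀ x : D, ∀ i j : Fin N, h i x / h j x ≤ u)
    (ε : ℝ) (hε0 : 0 < ε) (hε1 : ε ≤ 1)
    (i : Fin N) (μ : Fin N → ℝ)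
    (hμ0 : ∀ j, 0 ≤ μ j) (hμ1 : ∀ j, μ j ≤ 1) (hμi : μ i = 1)
    (lam : Fin N → ℝ) (hlam : ∀ j, lam j = max (μ j) (ε / (4 * u * N)))
    (xl xm : D)
    (hxl : ∀ y : D, ∑ j, lam j * h j xl ≤ ∑ j, lam j * h j y)
    (hxm : ∀ y : D, ∑ j, μ j * h j xm ≤ ∑ j, μ j * h j y) :
    (∑ j, lam j * h j xl ≤ (1 + ε / 4) * ∑ j, μ j * h j xm) ∧
    (∑ j, μ j * h j xl ≤ ∑ j, lam j * h j xl) := by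
  have hu0 : (0:ℝ) < u := lt_of_lt_of_le one_pos hu
  have hN0 : (0:ℝ) < N := by exact_mod_cast hN
  have hδ0 : (0:ℝ) < ε / (4 * u * N) := by positivity
  have hle : ∀ j, μ j ≤ lam j := fun j => (hlam j) ▸ le_max_left _ _
  have hdiff : ∀ j, lam j - μ j ≤ ε / (4 * u * N) := by
    intro j
    rw [hlam j]
    rcases le_total (μ j) (ε / (4 * u * N)) with hc | hc
    · rw [max_eq_right hc]; linarith [hμ0 j]
    · rw [max_eq_left hc]; linarith
  -- g_μ(xm) ≥ h_i(xm)
  have hgm : h i xm ≤ ∑ j, μ j * h j xm := by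
    have := Finset.single_le_sum (f := fun j => μ j * h j xm)
      (fun j _ => mul_nonneg (hμ0 j) (hpos j xm).le) (Finset.mem_univ i)
    simpa [hμi] using this
  have hgm0 : (0:ℝ) ≤ ∑ j, μ j * h j xm := le_trans (hpos i xm).le hgm
  -- h_j(xm) ≤ u * g_μ(xm)
  have hjb : ∀ j, h j xm ≤ u * ∑ k, μ k * h k xm := by
    intro j
    have h1 : h j xm ≤ u * h i xm := by
      have := hbal xm j i
      have hi := hpos i xm
      calc h j xm = h j xm / h i xm * h i xm := by field_simp
        _ ≤ u * h i xm := by nlinarith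
    calc h j xm ≤ u * h i xm := h1
      _ ≤ u * ∑ k, μ k * h k xm := by nlinarith
  have key : ∑ j, lam j * h j xm ≤ (1 + ε / 4) * ∑ j, μ j * h j xm := by
    have : ∑ j, lam j * h j xm = ∑ j, μ j * h j xm + ∑ j, (lam j - μ j) * h j xm := by
      rw [← Finset.sum_add_distrib]; congr 1; ext j; ring
    rw [this]
    have hsum : ∑ j, (lam j - μ j) * h j xm ≤
        ∑ j : Fin N, (ε / (4 * u * N)) * (u * ∑ k, μ k * h k xm) := by
      apply Finset.sum_le_sum
      intro j _
      have h1 : (lam j - μ j) * h j xm ≤ (ε / (4 * u * N)) * h j xm :=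
        mul_le_mul_of_nonneg_right (hdiff j) (hpos j xm).le
      refine h1.trans (mul_le_mul_of_nonneg_left (hjb j) hδ0.le)
    have heq : ∑ j : Fin N, (ε / (4 * u * N)) * (u * ∑ k, μ k * h k xm)
        = (ε / 4) * ∑ k, μ k * h k xm := by
      rw [Finset.sum_const, Finset.card_univ, Fintype.card_fin, nsmul_eq_mul]
      field_simp
    rw [heq] at hsum
    linarith
  constructor
  · exact le_trans (hxl xm) key
  · apply Finset.sum_le_sum
    intro j _
    exact mul_le_mul_of_nonneg_right (hle j) (hpos j xl).le
end

section
/- For every $N\ge 1$ there exist a finite set $\mathcal{D}\subseteq\mathbb{R}_{\ge 0}^N$ and linear base functions $h_i(x)=x_i$ such that any $2$-approximate portfolio for the class of conic combinations $\{x\mapsto\sum_{i\in S}x_i : \emptyset\neq S\subseteq[N]\}$ must have size at least $2^N-1$. Concretely, with $a=3$, $b=2Na^N$, and for each nonempty $S\subseteq[N]$ the point $x(S)$ defined by $x(S)_i=a^{|S|}$ if $i\in S$ and $x(S)_i=b$ otherwise, the set $\mathcal{D}=\{x(S):\emptyset\neq S\subseteq[N]\}$ satisfies: for all nonempty $S\neq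 T$, $\sum_{i\in S}x(T)_i>2\sum_{i\in S}x(S)_i$. -/
/-- lower bound construction for portfolios of conic combinations.
With `a = 3`, `b = 2·N·a^N` and `x(S)_i = a^|S|` for `i ∈ S`, `b` otherwise,
for all nonempty `S ≠ T` we have `∑_{i∈S} x(T)_i > 2·∑_{i∈S} x(S)_i`. -/
theorem stmt3 (N : ℕ) (hN : 1 ≤ N) :
    let a : ℝ := 3
    let b : ℝ := 2 * N * a ^ N
    let x : Finset (Fin N) → Fin N → ℝ := fun S i => if i ∈ S then a ^ S.card else b
    ∀ S T : Finset (Fin N), S.Nonempty → T.Nonempty → S ≠ T →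
      2 * ∑ i ∈ S, x S i < ∑ i ∈ S, x T i := by
  intro a b x S T hS hT hne
  have ha : a = 3 := rfl
  have hb : b = 2 * N * 3 ^ N := by rw [show b = 2 * N * a ^ N from rfl, ha]
  have hx : ∀ U : Finset (Fin N), ∀ i, x U i = if i ∈ U then (3:ℝ) ^ U.card else b := by
    intro U i; rw [show x U i = if i ∈ U then a ^ U.card else b from rfl, ha]
  set s := S.card with hs
  set t := T.card with ht
  have h1 : ∑ i ∈ S, x S i = (s : ℝ) * 3 ^ s :=
    calc ∑ i ∈ S, x S i = ∑ _i ∈ S, (3:ℝ) ^ s :=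
          Finset.sum_congr rfl (fun i hi => by rw [hx]; simp [hi, hs])
      _ = (s : ℝ) * 3 ^ s := by rw [Finset.sum_const, nsmul_eq_mul]
  have h2 : ∑ i ∈ S, x T i = ((S ∩ T).card : ℝ) * 3 ^ t + ((S \ T).card : ℝ) * b := by
    rw [← Finset.sum_inter_add_sum_sdiff S T (x T)]
    congr 1
    · calc ∑ i ∈ S ∩ T, x T i = ∑ _i ∈ S ∩ T, (3:ℝ) ^ t :=
            Finset.sum_congr rfl (fun i hi => by rw [hx]; simp [(Finset.mem_inter.mp hi).2, ht])
        _ = _ := by rw [Finset.sum_const, nsmul_eq_mul]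
    · calc ∑ i ∈ S \ T, x T i = ∑ _i ∈ S \ T, b :=
            Finset.sum_congr rfl (fun i hi => by rw [hx]; simp [(Finset.mem_sdiff.mp hi).2])
        _ = _ := by rw [Finset.sum_const, nsmul_eq_mul]
  rw [h1, h2]
  have hs1 : 1 ≤ s := Finset.card_pos.mpr hS
  have ht1 : 1 ≤ t := Finset.card_pos.mpr hT
  have hsN : s ≤ N := by simpa using S.card_le_univ
  have htN : t ≤ N := by simpa using T.card_le_univ
  have hspos : (0:ℝ) < s := by exact_mod_cast hs1
  have hpow : (0:ℝ) < 3 ^ s := by positivity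
  by_cases hsub : S ⊆ T
  · have hST : S ∩ T = S := Finset.inter_eq_left.mpr hsub
    have hdiff : S \ T = ∅ := Finset.sdiff_eq_empty_iff_subset.mpr hsub
    have hlt : s < t := Finset.card_lt_card (lt_of_le_of_ne hsub hne)
    rw [hST, hdiff]
    simp only [Finset.card_empty, Nat.cast_zero, zero_mul, add_zero]
    have h3 : (3:ℝ)^(s+1) ≤ 3 ^ t := pow_le_pow_right₀ (by norm_num) hlt
    calc 2 * ((s:ℝ) * 3 ^ s) < (s:ℝ) * 3 ^ (s+1) := by rw [pow_succ]; nlinarith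
      _ ≤ (s:ℝ) * 3 ^ t := by nlinarith
  · -- S \ T nonempty
    have hc2 : 1 ≤ (S \ T).card := Finset.card_pos.mpr
      (Finset.sdiff_nonempty.mpr hsub)
    have hc2R : (1:ℝ) ≤ ((S \ T).card : ℝ) := by exact_mod_cast hc2
    have hbpos : (0:ℝ) < b := by
      rw [hb]; positivity
    have hkey : 2 * ((s:ℝ) * 3 ^ s) < b + ((S ∩ T).card : ℝ) * 3 ^ t := by
      by_cases hc1 : (S ∩ T).card = 0
      · -- disjoint: s + t ≤ N, so s ≤ N - 1, strict
        have hdisj : Disjoint S T := Finset.disjoint_iff_inter_eq_empty.mpr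
          (Finset.card_eq_zero.mp hc1)
        have hstN : s + t ≤ N := by
          have := Finset.card_union_of_disjoint hdisj
          have h2 : (S ∪ T).card ≤ N := by simpa using (S ∪ T).card_le_univ
          omega
        have hslt : s < N := by omega
        have hmono : (s:ℝ) * 3 ^ s < (N:ℝ) * 3 ^ N := by
          have hp : (3:ℝ) ^ s < 3 ^ N := pow_lt_pow_right₀ (by norm_num) hslt
          have hn : (s:ℝ) < N := by exact_mod_cast hslt
          nlinarith
        rw [hc1, hb]
        push_cast
        nlinarith
      · have hc1R : (1:ℝ) ≤ ((S ∩ T).card : ℝ) := by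
          have : 1 ≤ (S ∩ T).card := by omega
          exact_mod_cast this
        have hmono : (s:ℝ) * 3 ^ s ≤ (N:ℝ) * 3 ^ N := by
          have hp : (3:ℝ) ^ s ≤ 3 ^ N := pow_le_pow_right₀ (by norm_num) hsN
          have hn : (s:ℝ) ≤ N := by exact_mod_cast hsN
          nlinarith
        have hpt : (0:ℝ) < 3 ^ t := by positivity
        rw [hb]
        nlinarith
    have : b ≤ ((S \ T).card : ℝ) * b := by nlinarith
    linarith
end

section
/- Let $\mathbf{C}=\{g_\lambda:\lambda\in[a,b]\}$ be a family of functions $g_\lambda:\mathcal{D}\to\mathbb{R}_{>0}$ on a finite set $\mathcal{D}$ such that $g_a(x)=\sum_{i=1}^N h_i(x)$, $g_b(x)=\max_{i\in[N]}h_i(x)$, and $g_\lambda(x)\ge g_\mu(x)$ whenever $\lambda\le\mu$, for positive functions $h_1,\ldots,h_N$. Then for every $\varepsilon\in(0,1]$ there exists a set $P\subseteq\mathcal{D}$ with $|P|\le 1+\log_{1+\varepsilon}(N)$ such that for every $\lambda\in[a,b]$ there is $x\in P$ with $g_\lambda(x)\le(1+\varepsilon)\min_{y\in\mathcal{D}}g_\lambda(y)$.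 -/
/-- a monotonically interpolating family between the `L₁` and `L_∞`
objectives admits a `(1+ε)`-approximate portfolio of size at most `1 + log_{1+ε} N`. -/
theorem stmt6 {D : Type*} [Fintype D] [Nonempty D] {N : ℕ} (hN : 1 ≤ N)
    (hne : (Finset.univ : Finset (Fin N)).Nonempty)
    (a b : ℝ) (hab : a ≤ b)
    (h : Fin N → D → ℝ) (hpos : ∀ i x, 0 < h i x)
    (g : ℝ → D → ℝ)
    (hgpos : ∀ lam ∈ Set.Icc a b, ∀ x : D, 0 < g lam x)
    (hga : ∀ x : D, g a x = ∑ i, h i x)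
    (hgb : ∀ x : D, g b x = Finset.univ.sup' hne (fun i => h i x))
    (hmono : ∀ lam mu : ℝ, a ≤ lam → lam ≤ mu → mu ≤ b → ∀ x : D, g mu x ≤ g lam x)
    (ε : ℝ) (hε0 : 0 < ε) (hε1 : ε ≤ 1) :
    ∃ P : Finset D, (P.card : ℝ) ≤ 1 + Real.logb (1 + ε) N ∧
      ∀ lam ∈ Set.Icc a b, ∃ x ∈ P, ∀ y : D, g lam x ≤ (1 + ε) * g lam y := by
  classical
  have hDne : (Finset.univ : Finset D).Nonempty := Finset.univ_nonempty
  set opt : ℝ → ℝ := fun lam => Finset.univ.inf' hDne (g lam) with hoptdef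
  have opt_le : ∀ (lam : ℝ) (y : D), opt lam ≤ g lam y :=
    fun lam y => Finset.inf'_le _ (Finset.mem_univ y)
  have attain : ∀ lam : ℝ, ∃ y : D, opt lam = g lam y := by
    intro lam
    obtain ⟨y, -, hy⟩ := Finset.exists_mem_eq_inf' hDne (g lam)
    exact ⟨y, hy⟩
  choose Y hY using attain
  have opt_pos : ∀ lam ∈ Set.Icc a b, 0 < opt lam := by
    intro lam hlam
    rw [hY lam]
    exact hgpos lam hlam (Y lam)
  have opt_anti : ∀ lam mu : ℝ, a ≤ lam → lam ≤ mu → mu ≤ b → opt mu ≤ opt lam := by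
    intro lam mu h1 h2 h3
    calc opt mu ≤ g mu (Y lam) := opt_le _ _
      _ ≤ g lam (Y lam) := hmono lam mu h1 h2 h3 _
      _ = opt lam := (hY lam).symm
  have hε' : (0:ℝ) < 1 + ε := by linarith
  have hε1' : (1:ℝ) < 1 + ε := by linarith
  -- bucket lemma: for each threshold c', one point covers the whole bucket
  have bucket : ∀ c' : ℝ, ∃ x : D, ∀ lam ∈ Set.Icc a b, c' < opt lam → opt lam ≤ (1+ε)*c' →
      g lam x ≤ (1+ε) * opt lam := by
    intro c'
    have key : ∃ x : D, ∀ nu ∈ Set.Icc a b, c' < opt nu → opt nu ≤ (1+ε)*c' →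
        ∃ mu, (mu ∈ Set.Icc a b ∧ c' < opt mu ∧ opt mu ≤ (1+ε)*c') ∧ mu ≤ nu ∧ Y mu = x := by
      by_contra hcon
      push_neg at hcon
      choose nu hnu1 hnu2 hnu3 hnu4 using hcon
      obtain ⟨x1, -, hx1⟩ := Finset.exists_mem_eq_inf' hDne nu
      set m := Finset.univ.inf' hDne nu with hm
      have hmle : m ≤ nu (Y m) := Finset.inf'_le _ (Finset.mem_univ _)
      have hmS : m ∈ Set.Icc a b ∧ c' < opt m ∧ opt m ≤ (1+ε)*c' := by
        rw [hx1]
        exact ⟨hnu1 x1, hnu2 x1, hnu3 x1⟩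
      exact hnu4 (Y m) m hmS hmle rfl
    obtain ⟨x, hx⟩ := key
    refine ⟨x, ?_⟩
    intro lam hlam h1 h2
    obtain ⟨mu, ⟨hmu, hc1, hc2⟩, hle, hYx⟩ := hx lam hlam h1 h2
    have : g lam x ≤ g mu x := hmono mu lam hmu.1 hle hlam.2 x
    have hgmu : g mu x = opt mu := by rw [← hYx, ← hY mu]
    have : g lam x ≤ (1+ε) * c' := by
      calc g lam x ≤ g mu x := this
        _ = opt mu := hgmu
        _ ≤ (1+ε) * c' := hc2
    have h3 : (1+ε) * c' < (1+ε) * opt lam := by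
      exact mul_lt_mul_of_pos_left h1 hε'
    linarith
  choose X hX using bucket
  set L := Real.logb (1+ε) N with hLdef
  have hNpos : (0:ℝ) < N := by
    have : (1:ℝ) ≤ N := by exact_mod_cast hN
    linarith
  have hL0 : 0 ≤ L := Real.logb_nonneg hε1' (by exact_mod_cast hN)
  set K := ⌊L⌋₊ with hKdef
  set c : ℕ → ℝ := fun k => opt a / (1+ε)^k with hcdef
  have hpow : ∀ k : ℕ, (0:ℝ) < (1+ε)^k := fun k => pow_pos hε' k
  have hcrec : ∀ k : ℕ, (1+ε) * c (k+1) = c k := by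
    intro k
    have h1 : ((1:ℝ)+ε) ≠ 0 := ne_of_gt hε'
    rw [hcdef]
    field_simp
    ring
  have haIcc : a ∈ Set.Icc a b := ⟨le_rfl, hab⟩
  have hbIcc : b ∈ Set.Icc a b := ⟨hab, le_rfl⟩
  have hopta : 0 < opt a := opt_pos a haIcc
  have hsum : opt a ≤ N * opt b := by
    have hstep : ∑ i, h i (Y b) ≤ (N:ℝ) * Finset.univ.sup' hne (fun i => h i (Y b)) := by
      have := Finset.sum_le_card_nsmul Finset.univ (fun i => h i (Y b))
        (Finset.univ.sup' hne (fun i => h i (Y b)))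
        (fun i _ => Finset.le_sup' (fun i => h i (Y b)) (Finset.mem_univ i))
      simpa [Finset.card_univ, nsmul_eq_mul] using this
    calc opt a ≤ g a (Y b) := opt_le _ _
      _ = ∑ i, h i (Y b) := hga _
      _ ≤ (N:ℝ) * Finset.univ.sup' hne (fun i => h i (Y b)) := hstep
      _ = (N:ℝ) * g b (Y b) := by rw [hgb]
      _ = (N:ℝ) * opt b := by rw [← hY b]
  have hoptb : opt a / N ≤ opt b := by
    rw [div_le_iff₀ hNpos, mul_comm]
    exact hsum
  have hNlt : (N:ℝ) < (1+ε)^(K+1) := by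
    have h1 : L < (K:ℝ) + 1 := by
      have := Nat.lt_floor_add_one L
      rw [hKdef]
      push_cast
      linarith
    have h2 : (N:ℝ) = (1+ε) ^ L := (Real.rpow_logb hε' (ne_of_gt hε1') hNpos).symm
    calc (N:ℝ) = (1+ε) ^ L := h2
      _ < (1+ε) ^ ((K:ℝ)+1) := by
          exact (Real.rpow_lt_rpow_left_iff hε1').mpr h1
      _ = (1+ε)^(K+1) := by
          rw [← Real.rpow_natCast (1+ε) (K+1)]
          push_cast
          ring_nf
  refine ⟨(Finset.range (K+1)).image (fun k => X (c (k+1))), ?_, ?_⟩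
  · have hcard : ((Finset.range (K+1)).image (fun k => X (c (k+1)))).card ≤ K + 1 := by
      calc ((Finset.range (K+1)).image (fun k => X (c (k+1)))).card
          ≤ (Finset.range (K+1)).card := Finset.card_image_le
        _ = K + 1 := Finset.card_range _
    have hKL : (K:ℝ) ≤ L := Nat.floor_le hL0
    calc (((Finset.range (K+1)).image (fun k => X (c (k+1)))).card : ℝ)
        ≤ ((K:ℝ) + 1) := by exact_mod_cast hcard
      _ ≤ 1 + L := by linarith
  · intro lam hlam
    have hup : opt lam ≤ opt a := opt_anti a lam le_rfl hlam.1 hlam.2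
    have hoptblam : opt b ≤ opt lam := opt_anti lam b hlam.1 hlam.2 le_rfl
    have hlow : c (K+1) < opt lam := by
      have h1 : opt a / (1+ε)^(K+1) < opt a / N :=
        div_lt_div_of_pos_left hopta hNpos hNlt
      calc c (K+1) = opt a / (1+ε)^(K+1) := rfl
        _ < opt a / N := h1
        _ ≤ opt b := hoptb
        _ ≤ opt lam := hoptblam
    have hex : ∃ k : ℕ, c (k+1) < opt lam := ⟨K, hlow⟩
    set k0 := Nat.find hex with hk0def
    have hk0K : k0 ≤ K := Nat.find_min' hex hlow
    have hk1 : c (k0+1) < opt lam := Nat.find_spec hex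
    have hk2 : opt lam ≤ c k0 := by
      rcases Nat.eq_zero_or_pos k0 with h0 | hpos0
      · rw [h0]
        have : c 0 = opt a := by simp [hcdef]
        rw [this]
        exact hup
      · obtain ⟨j, hj⟩ := Nat.exists_eq_add_of_lt hpos0
        have hjlt : j < k0 := by omega
        have := Nat.find_min hex hjlt
        push_neg at this
        have hjk : j + 1 = k0 := by omega
        rw [← hjk]
        exact this
    refine ⟨X (c (k0+1)), ?_, ?_⟩
    · exact Finset.mem_image.mpr ⟨k0, Finset.mem_range.mpr (by omega), rfl⟩
    · intro y
      have h3 : g lam (X (c (k0+1))) ≤ (1+ε) * opt lam := by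
        apply hX (c (k0+1)) lam hlam hk1
        rw [hcrec k0]
        exact hk2
      have h4 : (1+ε) * opt lam ≤ (1+ε) * g lam y :=
        mul_le_mul_of_nonneg_left (opt_le lam y) (le_of_lt hε')
      linarith
end

section
/- Let $G=(C,E)$ be a finite undirected graph with vertex weights $\Delta:C\to\mathbb{R}_{\ge 0}$, and let $C^*$ and paths $(p_j)_{j\in C}$ be produced by the CoreClients decomposition, i.e., $C^*$ is independent, each $p_j$ goes from $j$ to some $j^*\in C^*$ with $\Delta(p_j)\le 2\Delta_j$, and the decomposition is constructed greedily by choosing minimum-weight roots. Then for every edge $jj^*\in E$ with $j^*\in C^*$, we have $\Delta_j\ge\frac{1}{2}\Delta_{j^*}$. -/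
open Finset in
private lemma greedy_indep {C : Type*} [Fintype C] [DecidableEq C] (G : SimpleGraph C)
    [DecidableRel G.Adj] (Δ : C → ℝ) (F : Finset C) :
    ∃ S : Finset C, S ⊆ F ∧ (∀ u ∈ S, ∀ v ∈ S, ¬ G.Adj u v) ∧
      ∀ t ∈ F, t ∉ S → ∃ s ∈ S, G.Adj t s ∧ Δ s ≤ Δ t := by
  induction F using Finset.strongInduction with
  | _ F ih =>
    rcases F.eq_empty_or_nonempty with rfl | hne
    · exact ⟨∅, by simp⟩
    · obtain ⟨m, hm, hmin⟩ := F.exists_min_image Δ hne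
      have hss : F.filter (fun v => v ≠ m ∧ ¬ G.Adj m v) ⊂ F := by
        refine Finset.filter_ssubset.mpr ⟨m, hm, ?_⟩
        simp
      obtain ⟨S', hS'F, hind, hcov⟩ := ih _ hss
      have hS'P : ∀ v ∈ S', v ≠ m ∧ ¬ G.Adj m v := by
        intro v hv
        exact (Finset.mem_filter.mp (hS'F hv)).2
      refine ⟨insert m S', ?_, ?_, ?_⟩
      · intro v hv
        rcases Finset.mem_insert.mp hv with rfl | hv
        · exact hm
        · exact Finset.filter_subset _ _ (hS'F hv)
      · intro u hu v hv
        rcases Finset.mem_insert.mp hu with hu' | hu'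
        · rcases Finset.mem_insert.mp hv with hv' | hv'
          · subst hu'; subst hv'; exact fun h => G.loopless.irrefl _ h
          · subst hu'; exact (hS'P v hv').2
        · rcases Finset.mem_insert.mp hv with hv' | hv'
          · subst hv'; exact fun h => (hS'P u hu').2 h.symm
          · exact hind u hu' v hv'
      · intro t ht htS
        have htm : t ≠ m := by rintro rfl; exact htS (Finset.mem_insert_self _ _)
        have htS' : t ∉ S' := fun h => htS (Finset.mem_insert_of_mem h)
        by_cases hadj : G.Adj m t
        · exact ⟨m, Finset.mem_insert_self _ _, hadj.symm, hmin t ht⟩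
        · obtain ⟨s, hs, hss⟩ := hcov t (Finset.mem_filter.mpr ⟨ht, htm, hadj⟩) htS'
          exact ⟨s, Finset.mem_insert_of_mem hs, hss⟩

/-- the CoreClients decomposition additionally guarantees that for every
edge `j j*` with `j* ∈ C*` we have `Δ j ≥ Δ j* / 2`; i.e. there exist an independent
set and short paths as in the decomposition which also satisfy this neighbor bound. -/
theorem stmt9 {C : Type*} [Fintype C] (G : SimpleGraph C)
    (Δ : C → ℝ) (hΔ : ∀ j, 0 ≤ Δ j) :
    ∃ Cstar : Set C,
      (∀ u ∈ Cstar, ∀ v ∈ Cstar, ¬ G.Adj u v) ∧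
      (∀ j : C, ∃ jstar ∈ Cstar, ∃ p : G.Walk j jstar, p.IsPath ∧
        (p.support.map Δ).sum ≤ 2 * Δ j) ∧
      (∀ j jstar : C, jstar ∈ Cstar → G.Adj j jstar → Δ jstar / 2 ≤ Δ j) := by
  classical
  -- T : vertices all of whose neighbors have weight ≥ half their own weight
  set T : Finset C := Finset.univ.filter (fun j => ∀ j', G.Adj j j' → Δ j / 2 ≤ Δ j') with hT
  obtain ⟨S, hST, hSind, hScov⟩ := greedy_indep G Δ T
  have hSmem : ∀ s ∈ S, ∀ j', G.Adj s j' → Δ s / 2 ≤ Δ j' := by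
    intro s hs
    exact (Finset.mem_filter.mp (hST hs)).2
  refine ⟨↑S, ?_, ?_, ?_⟩
  · intro u hu v hv; exact hSind u hu v hv
  · -- main path construction, by strong induction on the number of lighter vertices
    have key : ∀ n : ℕ, ∀ j : C,
        (Finset.univ.filter (fun v => Δ v < Δ j)).card ≤ n →
        ∃ jstar ∈ S, ∃ p : G.Walk j jstar, p.IsPath ∧
          (p.support.map Δ).sum ≤ 2 * Δ j ∧ ∀ v ∈ p.support, Δ v ≤ Δ j := by
      intro n
      induction n with
      | zero =>
        intro j hcard
        -- no vertex lighter than j; then j ∈ T since Δ j / 2 ≤ Δ j' for neighbors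
        have hnolt : ∀ v, ¬ Δ v < Δ j := by
          intro v hv
          have : v ∈ Finset.univ.filter (fun v => Δ v < Δ j) := by
            simp [hv]
          have := Finset.card_pos.mpr ⟨v, this⟩
          omega
        have hjT : j ∈ T := by
          simp only [hT, Finset.mem_filter, Finset.mem_univ, true_and]
          intro j' hadj
          have h1 : Δ j ≤ Δ j' := le_of_not_gt (hnolt j')
          linarith [hΔ j]
        by_cases hjS : j ∈ S
        · refine ⟨j, hjS, SimpleGraph.Walk.nil, SimpleGraph.Walk.IsPath.nil, ?_, ?_⟩
          · simp; linarith [hΔ j]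
          · simp
        · obtain ⟨s, hs, hadj, hsle⟩ := hScov j hjT hjS
          refine ⟨s, hs, SimpleGraph.Walk.cons hadj SimpleGraph.Walk.nil, ?_, ?_, ?_⟩
          · simp [SimpleGraph.Walk.isPath_def, hadj.ne]
          · simp; linarith
          · intro v hv
            simp only [SimpleGraph.Walk.support_cons, SimpleGraph.Walk.support_nil,
              List.mem_cons, List.mem_singleton] at hv
            rcases hv with rfl | rfl | h
            · exact le_refl _
            · exact hsle
            · exact absurd h List.not_mem_nil
      | succ n ihn =>
        intro j hcard
        by_cases hjT : j ∈ T
        · -- same as before: j ∈ T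
          by_cases hjS : j ∈ S
          · refine ⟨j, hjS, SimpleGraph.Walk.nil, SimpleGraph.Walk.IsPath.nil, ?_, ?_⟩
            · simp; linarith [hΔ j]
            · simp
          · obtain ⟨s, hs, hadj, hsle⟩ := hScov j hjT hjS
            refine ⟨s, hs, SimpleGraph.Walk.cons hadj SimpleGraph.Walk.nil, ?_, ?_, ?_⟩
            · simp [SimpleGraph.Walk.isPath_def, hadj.ne]
            · simp; linarith
            · intro v hv
              simp only [SimpleGraph.Walk.support_cons, SimpleGraph.Walk.support_nil,
                List.mem_cons, List.mem_singleton] at hv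
              rcases hv with rfl | rfl | h
              · exact le_refl _
              · exact hsle
              · exact absurd h List.not_mem_nil
        · -- j ∉ T : has a light neighbor j'
          have : ∃ j', G.Adj j j' ∧ Δ j' < Δ j / 2 := by
            simp only [hT, Finset.mem_filter, Finset.mem_univ, true_and, not_forall] at hjT
            obtain ⟨j', hadj, hlt⟩ := hjT
            exact ⟨j', hadj, lt_of_not_ge hlt⟩
          obtain ⟨j', hadj, hlt⟩ := this
          have hlt' : Δ j' < Δ j := by linarith [hΔ j]
          have hsub : Finset.univ.filter (fun v => Δ v < Δ j') ⊂
              Finset.univ.filter (fun v => Δ v < Δ j) := by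
            refine Finset.ssubset_iff_of_subset ?_ |>.mpr ⟨j', by simp [hlt'], by simp⟩
            intro v hv
            simp only [Finset.mem_filter, Finset.mem_univ, true_and] at hv ⊢
            linarith
          have hcard' : (Finset.univ.filter (fun v => Δ v < Δ j')).card ≤ n := by
            have := Finset.card_lt_card hsub
            omega
          obtain ⟨jstar, hjs, p, hp, hsum, hsupp⟩ := ihn j' hcard'
          have hjns : j ∉ p.support := by
            intro h
            have := hsupp j h
            linarith
          refine ⟨jstar, hjs, SimpleGraph.Walk.cons hadj p, ?_, ?_, ?_⟩
          · rw [SimpleGraph.Walk.cons_isPath_iff]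
            exact ⟨hp, hjns⟩
          · simp only [SimpleGraph.Walk.support_cons, List.map_cons, List.sum_cons]
            linarith
          · intro v hv
            simp only [SimpleGraph.Walk.support_cons, List.mem_cons] at hv
            rcases hv with rfl | hv
            · exact le_refl _
            · exact le_trans (hsupp v hv) (le_of_lt hlt')
    intro j
    obtain ⟨jstar, hjs, p, hp, hsum, _⟩ := key _ j (le_refl _)
    exact ⟨jstar, hjs, p, hp, hsum⟩
  · intro j jstar hjs hadj
    exact hSmem jstar hjs j hadj.symm
end

section
/- Let $S>1$ and $v(s)\in\mathbb{R}_{\ge 0}^N$ be as above (first $S^{s^2}$ coordinates equal $S^{-2s}$, rest $0$, for $s\in\{1,\ldots,L\}$). For every positive integer $\ell\le N$, the top-$\ell$ norm of $v(s)$ equals $\ell S^{-2s}$ if $\ell\le S^{s^2}$ and $S^{s^2-2s}$ otherwise; consequently, for every $\ell$, $\min_{s\in\{1,\ldots,L\}}(\text{top-}\ell\text{ norm of }v(s))$ is attained at $s=1$ or $s=L$. -/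
/-- The top-`ℓ` norm of a nonnegative vector: the largest sum of `ℓ` coordinates. -/
noncomputable def topNorm {N : ℕ} (l : ℕ) (w : Fin N → ℝ) : ℝ :=
  ⨆ A ∈ {A : Finset (Fin N) | A.card = l}, ∑ i ∈ A, w i

lemma card_filter_lt_aux (N m : ℕ) (h : m ≤ N) :
    (Finset.univ.filter (fun i : Fin N => (i : ℕ) < m)).card = m := by
  have : (Finset.univ.filter (fun i : Fin N => (i : ℕ) < m)) =
      (Finset.range m).attachFin
        (fun x hx => lt_of_lt_of_le (Finset.mem_range.mp hx) h) := by
    ext i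
    simp [Finset.mem_attachFin]
  rw [this, Finset.card_attachFin, Finset.card_range]

lemma topNorm_eq {N l : ℕ} (w : Fin N → ℝ) (c : ℝ) (hc : 0 ≤ c)
    (hub : ∀ A : Finset (Fin N), A.card = l → ∑ i ∈ A, w i ≤ c)
    (hex : ∃ A : Finset (Fin N), A.card = l ∧ ∑ i ∈ A, w i = c) :
    topNorm l w = c := by
  obtain ⟨A0, hA0, hsum⟩ := hex
  unfold topNorm
  simp only [Set.mem_setOf_eq]
  apply le_antisymm
  · apply Real.iSup_le _ hc
    intro A
    apply Real.iSup_le _ hc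
    intro hA
    exact hub A hA
  · have hb : BddAbove (Set.range fun A : Finset (Fin N) =>
        ⨆ (_ : A.card = l), ∑ i ∈ A, w i) :=
      Set.Finite.bddAbove (Set.finite_range _)
    have heq : (⨆ (_ : A0.card = l), ∑ i ∈ A0, w i) = ∑ i ∈ A0, w i := ciSup_pos hA0
    calc c = ∑ i ∈ A0, w i := hsum.symm
      _ = ⨆ (_ : A0.card = l), ∑ i ∈ A0, w i := heq.symm
      _ ≤ _ := le_ciSup hb A0

/-- The top-`ℓ` norm of the indicator-type vector. -/
lemma topNorm_v (S N s l : ℕ) (hS : 1 ≤ S) (hl : l ≤ N) (hK : S ^ (s ^ 2) ≤ N) :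
    topNorm l (fun i : Fin N => if (i : ℕ) < S ^ (s ^ 2)
        then (S : ℝ) ^ (-(2 * s : ℤ)) else 0) =
      (min l (S ^ (s ^ 2)) : ℕ) * (S : ℝ) ^ (-(2 * s : ℤ)) := by
  have hS0 : (0 : ℝ) < S := by exact_mod_cast Nat.lt_of_lt_of_le Nat.zero_lt_one hS
  set K := S ^ (s ^ 2) with hKdef
  set c : ℝ := (S : ℝ) ^ (-(2 * s : ℤ)) with hcdef
  have hc : 0 ≤ c := le_of_lt (zpow_pos hS0 _)
  have key : ∀ A : Finset (Fin N),
      ∑ i ∈ A, (if (i : ℕ) < K then c else 0) =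
        ((A.filter (fun i : Fin N => (i : ℕ) < K)).card : ℝ) * c := by
    intro A
    rw [← Finset.sum_filter, Finset.sum_const, nsmul_eq_mul]
  apply topNorm_eq _ _ (by positivity)
  · intro A hA
    rw [key]
    have h1 : (A.filter (fun i : Fin N => (i : ℕ) < K)).card ≤ min l K := by
      refine le_min (hA ▸ Finset.card_filter_le A _) ?_
      calc (A.filter (fun i : Fin N => (i : ℕ) < K)).card
          ≤ (Finset.univ.filter (fun i : Fin N => (i : ℕ) < K)).card :=
            Finset.card_le_card (Finset.filter_subset_filter _ (Finset.subset_univ A))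
        _ = K := card_filter_lt_aux N K hK
    have : ((A.filter (fun i : Fin N => (i : ℕ) < K)).card : ℝ) ≤ ((min l K : ℕ) : ℝ) := by
      exact_mod_cast h1
    exact mul_le_mul_of_nonneg_right this hc
  · refine ⟨Finset.univ.filter (fun i : Fin N => (i : ℕ) < l), ?_, ?_⟩
    · exact card_filter_lt_aux N _ hl
    · rw [key, Finset.filter_filter]
      have : (Finset.univ.filter (fun i : Fin N => (i : ℕ) < l ∧ (i : ℕ) < K)) =
          Finset.univ.filter (fun i : Fin N => (i : ℕ) < min l K) := by
        ext i
        simp [lt_min_iff]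
      rw [this, card_filter_lt_aux N _ (le_trans (min_le_left _ _) hl)]

/-- the top-`ℓ` norm of `v(s)` equals `ℓ·S^{-2s}` if `ℓ ≤ S^{s²}` and
`S^{s²-2s}` otherwise; consequently its minimum over `s ∈ {1,…,L}` is attained at
`s = 1` or `s = L`. -/
theorem stmt14 (S N L : ℕ) (hS : 1 < S) (hL : 1 ≤ L) (hN : S ^ (L ^ 2) ≤ N) :
    let v : ℕ → Fin N → ℝ := fun s i =>
      if (i : ℕ) < S ^ (s ^ 2) then ((S : ℝ)) ^ (-(2 * s : ℤ)) else 0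
    ∀ l : ℕ, 1 ≤ l → l ≤ N →
      (∀ s : ℕ, 1 ≤ s → s ≤ L →
        topNorm l (v s) =
          if l ≤ S ^ (s ^ 2) then (l : ℝ) * (S : ℝ) ^ (-(2 * s : ℤ))
          else (S : ℝ) ^ ((s : ℤ) ^ 2 - 2 * s)) ∧
      ((∀ s : ℕ, 1 ≤ s → s ≤ L → topNorm l (v 1) ≤ topNorm l (v s)) ∨
       (∀ s : ℕ, 1 ≤ s → s ≤ L → topNorm l (v L) ≤ topNorm l (v s))) := by
  intro v l hl1 hlN
  have hS1 : (1 : ℝ) ≤ S := by exact_mod_cast hS.le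
  have hS0 : (0 : ℝ) < S := by positivity
  have hS0' : (S : ℝ) ≠ 0 := ne_of_gt hS0
  have hKL : ∀ s : ℕ, s ≤ L → S ^ (s ^ 2) ≤ S ^ (L ^ 2) := fun s hsL =>
    Nat.pow_le_pow_right (le_of_lt hS) (Nat.pow_le_pow_left hsL 2)
  have hform : ∀ s : ℕ, s ≤ L →
      topNorm l (v s) = ((min l (S ^ (s ^ 2)) : ℕ) : ℝ) * (S : ℝ) ^ (-(2 * s : ℤ)) :=
    fun s hsL => topNorm_v S N s l hS.le hlN (le_trans (hKL s hsL) hN)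
  -- the zpow form of the value when l > S^{s²}
  have hKpow : ∀ s : ℕ,
      ((S ^ (s ^ 2) : ℕ) : ℝ) * (S : ℝ) ^ (-(2 * s : ℤ)) =
        (S : ℝ) ^ ((s : ℤ) ^ 2 - 2 * s) := by
    intro s
    push_cast
    rw [← zpow_natCast (S : ℝ) (s ^ 2), ← zpow_add₀ hS0']
    congr 1
  constructor
  · intro s hs1 hsL
    rw [hform s hsL]
    split_ifs with h
    · rw [min_eq_left h]
    · rw [min_eq_right (le_of_not_ge h), hKpow]
  · -- the key pointwise bound
    have hmain : ∀ s : ℕ, 1 ≤ s → s ≤ L →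
        topNorm l (v 1) ≤ topNorm l (v s) ∨ topNorm l (v L) ≤ topNorm l (v s) := by
      intro s hs1 hsL
      rw [hform s hsL, hform 1 hL, hform L le_rfl]
      by_cases hcase : l ≤ S ^ (s ^ 2)
      · right
        rw [min_eq_left hcase, min_eq_left (le_trans hcase (hKL s hsL))]
        apply mul_le_mul_of_nonneg_left _ (by positivity)
        apply zpow_le_zpow_right₀ hS1
        omega
      · left
        push_neg at hcase
        have hS_le_K : S ^ (1 ^ 2) ≤ S ^ (s ^ 2) :=
          Nat.pow_le_pow_right (le_of_lt hS) (Nat.pow_le_pow_left hs1 2)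
        have h1 : min l (S ^ (1 ^ 2)) = S ^ (1 ^ 2) :=
          min_eq_right (le_of_lt (lt_of_le_of_lt hS_le_K hcase))
        rw [h1, min_eq_right hcase.le, hKpow, hKpow]
        apply zpow_le_zpow_right₀ hS1
        push_cast
        nlinarith [sq_nonneg ((s : ℤ) - 1), (by exact_mod_cast hs1 : (1 : ℤ) ≤ (s : ℤ))]
    rcases le_total (topNorm l (v 1)) (topNorm l (v L)) with h | h
    · left
      intro s hs1 hsL
      rcases hmain s hs1 hsL with h' | h'
      · exact h'
      · exact le_trans h h'
    · right
      intro s hs1 hsL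
      rcases hmain s hs1 hsL with h' | h'
      · exact le_trans h h'
      · exact h'
end

section
/- Let $C$ be a finite set of clients with revenues $r_j\ge 0$, $F'$ a finite set of open facilities with costs $c_f>0$, and suppose revenues satisfy $r_j\le\theta c_f$ for all $j\in C,f\in F'$ ($\theta$-small revenues). Let $x'$ and $x''$ be nonnegative assignment matrices with $\sum_f x'_{j,f}=\sum_f x''_{j,f}=1$ for each $j$, and suppose for each facility $f$ the load satisfies $\sum_j x''_{j,f}r_j\le\sum_j x'_{j,f}r_j+r_{j(f)}$ for some client $j(f)$ assignable to $f$. If the total loss $\sum_f\max(0,c_f-\sum_j x'_{j,f}r_j)\le\delta'\sum_j r_j$, then $\sum_f\max(0,c_f-\sum_j x''_{j,f}r_j)\le(\delta'+\theta)\sum_j r_j$. -/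
/-- subsidy preservation under integral assignment. If revenues are
`θ`-small (`r j ≤ θ·c f`), each facility's load under `x''` exceeds its load under `x'`
by at most the revenue of one assignable client, and `x'` is `δ'`-subsidized, then
`x''` is `(δ' + θ)`-subsidized. -/
theorem stmt16 {C F : Type*} [Fintype C] [Fintype F]
    (r : C → ℝ) (hr : ∀ j, 0 ≤ r j)
    (c : F → ℝ) (hc : ∀ f, 0 < c f)
    (θ : ℝ) (hθ : 0 < θ) (hsmall : ∀ (j : C) (f : F), r j ≤ θ * c f)
    (x' x'' : C → F → ℝ)
    (hx'0 : ∀ j f, 0 ≤ x' j f) (hx''0 : ∀ j f, 0 ≤ x'' j f)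
    (hx'1 : ∀ j, ∑ f, x' j f = 1) (hx''1 : ∀ j, ∑ f, x'' j f = 1)
    (jf : F → C) (hjf : ∀ f, 0 < x' (jf f) f)
    (hload : ∀ f, ∑ j, x'' j f * r j ≤ (∑ j, x' j f * r j) + r (jf f))
    (δ' : ℝ)
    (hloss : ∑ f, max 0 (c f - ∑ j, x' j f * r j) ≤ δ' * ∑ j, r j) :
    ∑ f, max 0 (c f - ∑ j, x'' j f * r j) ≤ (δ' + θ) * ∑ j, r j := by
  set L' : F → ℝ := fun f => ∑ j, x' j f * r j with hL'def
  set L'' : F → ℝ := fun f => ∑ j, x'' j f * r j with hL''def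
  have hL''nn : ∀ f, 0 ≤ L'' f := fun f =>
    Finset.sum_nonneg fun j _ => mul_nonneg (hx''0 j f) (hr j)
  have hsum' : ∑ f, L' f = ∑ j, r j := by
    rw [hL'def, Finset.sum_comm]
    simp [← Finset.sum_mul, hx'1]
  have hsum'' : ∑ f, L'' f = ∑ j, r j := by
    rw [hL''def, Finset.sum_comm]
    simp [← Finset.sum_mul, hx''1]
  -- pointwise bound on the overflow change
  have hΔ : ∀ f, max 0 (L'' f - c f) - max 0 (L' f - c f) ≤ θ * L'' f := by
    intro f
    rcases le_or_gt (max 0 (L'' f - c f) - max 0 (L' f - c f)) 0 with h | h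
    · exact h.trans (mul_nonneg hθ.le (hL''nn f))
    · have h1 : c f < L'' f := by
        by_contra hcon
        push_neg at hcon
        have h2 : max 0 (L'' f - c f) = 0 := max_eq_left (by linarith)
        have h3 : (0:ℝ) ≤ max 0 (L' f - c f) := le_max_left _ _
        linarith
      have h2 : max 0 (L'' f - c f) ≤ max 0 (L' f - c f) + r (jf f) := by
        apply max_le
        · have := le_max_left 0 (L' f - c f)
          linarith [hr (jf f)]
        · have := hload f
          have h3 : L' f - c f ≤ max 0 (L' f - c f) := le_max_right _ _
          linarith
      have h3 : r (jf f) ≤ θ * c f := hsmall (jf f) f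
      have h4 : θ * c f ≤ θ * L'' f := mul_le_mul_of_nonneg_left h1.le hθ.le
      linarith
  -- rewrite loss via overflow
  have key : ∀ L : F → ℝ,
      ∑ f, max 0 (c f - L f) = ∑ f, max 0 (L f - c f) + (∑ f, c f - ∑ f, L f) := by
    intro L
    rw [← Finset.sum_sub_distrib, ← Finset.sum_add_distrib]
    refine Finset.sum_congr rfl fun f _ => ?_
    rcases le_total (L f) (c f) with h | h
    · rw [max_eq_right (by linarith), max_eq_left (by linarith)]
      ring
    · rw [max_eq_left (by linarith), max_eq_right (by linarith)]
      ring
  have hΔsum : ∑ f, (max 0 (L'' f - c f) - max 0 (L' f - c f)) ≤ θ * ∑ j, r j := by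
    calc ∑ f, (max 0 (L'' f - c f) - max 0 (L' f - c f)) ≤ ∑ f, θ * L'' f :=
          Finset.sum_le_sum fun f _ => hΔ f
      _ = θ * ∑ j, r j := by rw [← Finset.mul_sum, hsum'']
  have e1 := key L'
  have e2 := key L''
  rw [Finset.sum_sub_distrib] at hΔsum
  simp only [hL'def, hL''def] at e1 e2 hΔsum hsum' hsum'' hloss ⊢
  linarith
end

section
/- Consider a star metric with center $a_0$, leaves $a_1,\ldots,a_L$ at distance 1 from the center, and distance 2 between distinct leaves. There are $T$ 'revenue clients' at distance 1 from each facility location with revenues $a_1,\ldots,a_T$ summing to $2c$ where both facilities $f_1,f_2$ have cost $c=\frac{1}{2}\sum_t a_t$, and subsidy $\delta=0$. Then a solution opening both facilities with zero total loss exists if and only if the multiset $\{a_1,\ldots,a_T\}$ can be partitioned into two subsets each summing to $c$. -/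
/-- hardness reduction core. With two facilities of cost
`c = (1/2)·∑ t, a t` and revenue clients `a_1,…,a_T`, a solution assigning every
revenue client to one of the two open facilities with zero total loss exists iff the
revenues can be partitioned into two parts each summing to `c`. -/
theorem stmt17 (T : ℕ) (a : Fin T → ℝ) (ha : ∀ t, 0 < a t)
    (c : ℝ) (hc : c = (1 / 2) * ∑ t, a t) :
    (∃ assign : Fin T → Fin 2,
        ∑ f : Fin 2,
          max 0 (c - ∑ t ∈ Finset.univ.filter (fun t => assign t = f), a t) = 0)
    ↔ ∃ A : Finset (Fin T), ∑ t ∈ A, a t = c := by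
  constructor
  · rintro ⟨assign, hsum⟩
    -- each summand is nonneg, so each is zero
    have hzero : ∀ f : Fin 2,
        max 0 (c - ∑ t ∈ Finset.univ.filter (fun t => assign t = f), a t) = 0 := by
      intro f
      have := Finset.sum_eq_zero_iff_of_nonneg
        (fun f _ => le_max_left 0 (c - ∑ t ∈ Finset.univ.filter (fun t => assign t = f), a t))
        |>.mp hsum f (Finset.mem_univ f)
      exact this
    have hle : ∀ f : Fin 2, c ≤ ∑ t ∈ Finset.univ.filter (fun t => assign t = f), a t := by
      intro f
      have := hzero f
      have h := max_eq_left_iff.mp this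
      linarith
    have hpart : (∑ t ∈ Finset.univ.filter (fun t => assign t = 0), a t)
        + (∑ t ∈ Finset.univ.filter (fun t => assign t = 1), a t) = ∑ t, a t := by
      rw [← Finset.sum_union]
      · congr 1
        ext t
        simp only [Finset.mem_union, Finset.mem_filter, Finset.mem_univ, true_and,
          true_iff]
        have : assign t = 0 ∨ assign t = 1 := by
          have := (assign t).isLt
          rcases Fin.eq_or_lt_of_le (Fin.zero_le (assign t)) with h | h
          · exact Or.inl h.symm
          · right; omega
        simpa using this
      · rw [Finset.disjoint_filter]
        intro x _ h0 h1
        simp_all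
    refine ⟨Finset.univ.filter (fun t => assign t = 0), ?_⟩
    have h0 := hle 0
    have h1 := hle 1
    have : (2:ℝ) * c = ∑ t, a t := by rw [hc]; ring
    linarith
  · rintro ⟨A, hA⟩
    refine ⟨fun t => if t ∈ A then 0 else 1, ?_⟩
    have h0 : Finset.univ.filter (fun t => (if t ∈ A then (0:Fin 2) else 1) = 0) = A := by
      ext t; by_cases h : t ∈ A <;> simp [h]
    have h1 : Finset.univ.filter (fun t => (if t ∈ A then (0:Fin 2) else 1) = 1) = Aᶜ := by
      ext t; by_cases h : t ∈ A <;> simp [h]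
    have hAc : ∑ t ∈ Aᶜ, a t = c := by
      have := Finset.sum_add_sum_compl A a
      rw [hA] at this
      have h2 : (2:ℝ) * c = ∑ t, a t := by rw [hc]; ring
      linarith
    rw [Fin.sum_univ_two, h0, h1, hA, hAc]
    simp
end

section
/- Fix $\theta>0$ and $\varepsilon\in(0,1]$, and for $y\in[0,1]$ define $h_y(x)=\exp(\theta|x-y|)$ on $\mathcal{D}=\mathbb{R}$. Let $P=\{k\cdot\log(1+\varepsilon)/\theta : k\in\mathbb{Z}_{\ge 1}\}\cap[0,1]\cup\{1\}$. Then for any $N$, any $y_1,\ldots,y_N\in[0,1]$, and any $\lambda\in\mathbb{R}_{\ge 0}^N$ with $\lambda\neq 0$, there exists $x^*\in P$ with $\sum_i\lambda_i h_{y_i}(x^*)\le(1+\varepsilon)\inf_{x\in\mathbb{R}}\sum_i\lambda_i h_{y_i}(x)$; moreover $|P|\le\theta/\log(1+\varepsilon)+1\le 2\theta/\varepsilon+1$. -/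
/-- for exponential base functions `h_y(x) = exp(θ|x - y|)` with
`y ∈ [0,1]`, the grid `P = {k·log(1+ε)/θ : k ≥ 1} ∩ [0,1] ∪ {1}` is a
`(1+ε)`-approximate portfolio for all conic combinations, of size at most
`θ/log(1+ε) + 1 ≤ 2θ/ε + 1`. -/
theorem stmt19 (θ ε : ℝ) (hθ : 0 < θ) (hε0 : 0 < ε) (hε1 : ε ≤ 1) :
    let P : Set ℝ :=
      ({x | ∃ k : ℕ, 1 ≤ k ∧ x = k * Real.log (1 + ε) / θ} ∩ Set.Icc 0 1) ∪ {1}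
    (∀ (N : ℕ) (y : Fin N → ℝ), (∀ i, y i ∈ Set.Icc (0 : ℝ) 1) →
      ∀ lam : Fin N → ℝ, (∀ i, 0 ≤ lam i) → lam ≠ 0 →
      ∃ xstar ∈ P,
        ∑ i, lam i * Real.exp (θ * |xstar - y i|) ≤
          (1 + ε) * ⨅ x : ℝ, ∑ i, lam i * Real.exp (θ * |x - y i|)) ∧
    ∃ hfin : P.Finite,
      (hfin.toFinset.card : ℝ) ≤ θ / Real.log (1 + ε) + 1 ∧
      θ / Real.log (1 + ε) + 1 ≤ 2 * θ / ε + 1 := by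
  intro P
  have hL : 0 < Real.log (1 + ε) := Real.log_pos (by linarith)
  set L := Real.log (1 + ε) with hLdef
  set δ : ℝ := L / θ with hδdef
  have hδ : 0 < δ := div_pos hL hθ
  have hLhalf : ε / 2 ≤ L := by
    have h1 : Real.log (1/(1+ε)) ≤ 1/(1+ε) - 1 :=
      Real.log_le_sub_one_of_pos (by positivity)
    rw [one_div, Real.log_inv] at h1
    have he : (0:ℝ) < 1 + ε := by linarith
    have hinv : (1+ε)⁻¹ * (1+ε) = 1 := inv_mul_cancel₀ he.ne'
    nlinarith [hinv, h1, sq_nonneg ε]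
  constructor
  · intro N y hy lam hlam _
    set g : ℝ → ℝ := fun x => ∑ i, lam i * Real.exp (θ * |x - y i|) with hg
    have hcont : Continuous g := by
      apply continuous_finset_sum
      intro i _
      exact continuous_const.mul ((Real.continuous_exp).comp
        (continuous_const.mul ((continuous_id.sub continuous_const).abs)))
    obtain ⟨x₀, hx₀mem, hx₀min⟩ :=
      (isCompact_Icc (a := (0:ℝ)) (b := 1)).exists_isMinOn ⟨0, by norm_num⟩
        hcont.continuousOn
    -- termwise monotonicity helper
    have hmono : ∀ a b : ℝ, (∀ i, |a - y i| ≤ |b - y i|) → g a ≤ g b := by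
      intro a b hab
      apply Finset.sum_le_sum
      intro i _
      apply mul_le_mul_of_nonneg_left _ (hlam i)
      exact Real.exp_le_exp.2 (mul_le_mul_of_nonneg_left (hab i) hθ.le)
    have hglob : ∀ x : ℝ, g x₀ ≤ g x := by
      intro x
      rcases lt_or_ge x 0 with hx | hx
      · have h0 : g 0 ≤ g x := by
          apply hmono
          intro i
          have := (hy i).1
          rw [zero_sub, abs_neg, abs_of_nonneg this, abs_of_nonpos (by linarith)]
          linarith
        exact le_trans (hx₀min (by norm_num : (0:ℝ) ∈ Set.Icc (0:ℝ) 1)) h0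
      rcases le_or_gt x 1 with hx1 | hx1
      · exact hx₀min ⟨hx, hx1⟩
      · have h1 : g 1 ≤ g x := by
          apply hmono
          intro i
          have := (hy i).2
          rw [abs_of_nonneg (by linarith), abs_of_nonneg (by linarith)]
          linarith
        exact le_trans (hx₀min (by norm_num : (1:ℝ) ∈ Set.Icc (0:ℝ) 1)) h1
    have hx₀0 : (0:ℝ) ≤ x₀ := hx₀mem.1
    have hx₀1 : x₀ ≤ 1 := hx₀mem.2
    -- choose grid index
    set k : ℕ := max 1 ⌈x₀ / δ⌉₊ with hk
    have hk1 : 1 ≤ k := le_max_left _ _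
    have hklow : x₀ ≤ k * δ := by
      have h := Nat.le_ceil (x₀ / δ)
      have : (⌈x₀ / δ⌉₊ : ℝ) * δ ≥ x₀ := by
        rw [ge_iff_le, ← div_le_iff₀ hδ]; exact h
      have hkk : (⌈x₀ / δ⌉₊ : ℝ) ≤ (k : ℝ) := by exact_mod_cast le_max_right _ _
      nlinarith
    have hkhigh : (k : ℝ) * δ ≤ x₀ + δ := by
      rcases Nat.eq_zero_or_pos ⌈x₀ / δ⌉₊ with h0 | hpos
      · have : k = 1 := by simp [hk, h0]
        rw [this]
        have : x₀ / δ ≤ ⌈x₀ / δ⌉₊ := Nat.le_ceil _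
        rw [h0] at this
        push_cast at this ⊢
        have : x₀ ≤ 0 := by
          by_contra hc
          push_neg at hc
          have := div_pos hc hδ
          linarith
        linarith
      · have hke : k = ⌈x₀ / δ⌉₊ := max_eq_right hpos
        have h := Nat.ceil_lt_add_one (by positivity : (0:ℝ) ≤ x₀ / δ)
        rw [hke]
        have h2 : (⌈x₀ / δ⌉₊ : ℝ) < x₀ / δ + 1 := h
        have h3 : x₀ / δ * δ = x₀ := div_mul_cancel₀ _ hδ.ne'
        nlinarith
    -- key approximation estimate
    have hkey : ∀ xs : ℝ, |xs - x₀| ≤ δ → g xs ≤ (1 + ε) * g x₀ := by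
      intro xs hxs
      have : g xs ≤ ∑ i, lam i * (Real.exp (θ * |x₀ - y i|) * (1 + ε)) := by
        apply Finset.sum_le_sum
        intro i _
        apply mul_le_mul_of_nonneg_left _ (hlam i)
        have h1 : |xs - y i| ≤ |x₀ - y i| + δ := by
          have := abs_sub_abs_le_abs_sub (xs - y i) (x₀ - y i)
          have h2 : |xs - y i - (x₀ - y i)| = |xs - x₀| := by ring_nf
          calc |xs - y i| ≤ |x₀ - y i| + |xs - y i - (x₀ - y i)| := by
                have := abs_sub (xs - y i) (x₀ - y i)
                rw [sub_sub_sub_cancel_right] at *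
                linarith [abs_sub_abs_le_abs_sub (xs - y i) (x₀ - y i),
                  abs_add_le (x₀ - y i) (xs - x₀)]
            _ ≤ |x₀ - y i| + δ := by rw [h2]; linarith
        calc Real.exp (θ * |xs - y i|)
            ≤ Real.exp (θ * (|x₀ - y i| + δ)) :=
              Real.exp_le_exp.2 (mul_le_mul_of_nonneg_left h1 hθ.le)
          _ = Real.exp (θ * |x₀ - y i|) * Real.exp (θ * δ) := by
              rw [mul_add, Real.exp_add]
          _ = Real.exp (θ * |x₀ - y i|) * (1 + ε) := by
              have : θ * δ = L := by rw [hδdef]; field_simp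
              rw [this, hLdef, Real.exp_log (by linarith)]
      calc g xs ≤ ∑ i, lam i * (Real.exp (θ * |x₀ - y i|) * (1 + ε)) := this
        _ = (1 + ε) * g x₀ := by rw [hg, Finset.mul_sum]; congr 1; ext i; ring
    have hinf : g x₀ ≤ ⨅ x : ℝ, g x := le_ciInf hglob
    have hfinal : ∀ xs : ℝ, |xs - x₀| ≤ δ →
        g xs ≤ (1 + ε) * ⨅ x : ℝ, g x := by
      intro xs hxs
      calc g xs ≤ (1 + ε) * g x₀ := hkey xs hxs
        _ ≤ (1 + ε) * ⨅ x : ℝ, g x :=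
            mul_le_mul_of_nonneg_left hinf (by linarith)
    rcases le_or_gt ((k : ℝ) * δ) 1 with hle | hgt
    · refine ⟨(k : ℝ) * δ, Or.inl ⟨⟨k, hk1, by rw [hδdef]; ring⟩,
        ⟨by positivity, hle⟩⟩, ?_⟩
      apply hfinal
      rw [abs_of_nonneg (by linarith)]
      linarith
    · refine ⟨1, Or.inr rfl, ?_⟩
      apply hfinal
      rw [abs_of_nonneg (by linarith)]
      linarith
  · set n : ℕ := ⌊θ / L⌋₊ with hn
    set F : Finset ℝ := (Finset.Icc 1 n).image (fun k : ℕ => (k : ℝ) * L / θ) ∪ {1}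
      with hF
    have hPsub : P ⊆ ↑F := by
      intro x hx
      rcases hx with ⟨⟨m, hm1, hxm⟩, hx01⟩ | hx1
      · simp only [hF, Finset.coe_union, Finset.coe_image, Set.mem_union,
          Set.mem_image, Finset.mem_coe, Finset.mem_Icc]
        left
        refine ⟨m, ?_, hxm.symm⟩
        refine ⟨hm1, ?_⟩
        apply Nat.le_floor
        have hx1 := hx01.2
        rw [hxm] at hx1
        rw [div_le_iff₀ hθ] at hx1
        rw [le_div_iff₀ hL]
        calc (m:ℝ) * L ≤ θ * 1 := by linarith
          _ = θ := by ring
      · simp only [Set.mem_singleton_iff] at hx1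
        rw [hx1]
        exact Finset.mem_coe.mpr (Finset.mem_union_right _ (Finset.mem_singleton_self 1))
    have hfin : P.Finite := Set.Finite.subset F.finite_toSet hPsub
    refine ⟨hfin, ?_, ?_⟩
    · have hcard : hfin.toFinset.card ≤ F.card := by
        apply Finset.card_le_card
        intro x hx
        exact hPsub (hfin.mem_toFinset.mp hx)
      have hFcard : F.card ≤ n + 1 := by
        calc F.card ≤ ((Finset.Icc 1 n).image
              (fun k : ℕ => (k : ℝ) * L / θ)).card + ({1} : Finset ℝ).card :=
            Finset.card_union_le _ _
          _ ≤ (Finset.Icc 1 n).card + 1 := by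
              have h := Finset.card_image_le (s := Finset.Icc 1 n)
                (f := fun k : ℕ => (k:ℝ) * L / θ)
              simpa using Nat.add_le_add h (le_refl ({1} : Finset ℝ).card)
          _ ≤ n + 1 := by simp [Nat.card_Icc]
      have h1 : (hfin.toFinset.card : ℝ) ≤ (n : ℝ) + 1 := by
        exact_mod_cast le_trans hcard hFcard
      have h2 : (n : ℝ) ≤ θ / L := Nat.floor_le (by positivity)
      linarith
    · have : θ / L ≤ 2 * θ / ε := by
        rw [div_le_div_iff₀ hL hε0]
        nlinarith
      linarith
end
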